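/- The function F(m,x) = ∏_{s=1}^{2m} q^{-1}·ϑ_{q⁴}(x²q²p^{-s})·ϑ_{q⁴}(x^{-2}q²p^{s})/(ϑ_{q⁴}(x^{-2}p^{s})·ϑ_{q⁴}(x²p^{-s})) is invariant under the replacement p → p·q⁴: F is the same function of x whether evaluated with parameter p or with parameter p·q⁴, for any positive integer m and 0 < |p|, |q|, |p q⁴| < 1. -/

import Mathlib

open Complex Finset

/-- The q-Pochhammer infinite product `(x;a)_∞ = ∏_{n≥0} (1 - x aⁿ)`. -/
noncomputable def qPoch (x a : ℂ) : ℂ := ∏' n : ℕ, (1 - x * a ^ n)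

/-- The Jacobi theta function `ϑ_a(x) = (x;a)_∞ (a x⁻¹;a)_∞ (a;a)_∞`. -/
noncomputable def theta (a x : ℂ) : ℂ := qPoch x a * qPoch (a * x⁻¹) a * qPoch a a

/-- The exchange function `F(m,x)` of eq. (2.6a), for positive `m`. -/
noncomputable def Fexch (q p : ℂ) (m : ℕ) (x : ℂ) : ℂ :=
  ∏ s ∈ Finset.Icc 1 (2 * m),
    q⁻¹ * theta (q ^ 4) (x ^ 2 * q ^ 2 * p ^ (-(s : ℤ))) *
      theta (q ^ 4) (x⁻¹ ^ 2 * q ^ 2 * p ^ (s : ℤ)) /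
      (theta (q ^ 4) (x⁻¹ ^ 2 * p ^ (s : ℤ)) * theta (q ^ 4) (x ^ 2 * p ^ (-(s : ℤ))))

lemma qPoch_multipliable (x a : ℂ) (ha : ‖a‖ < 1) :
    Multipliable (fun n : ℕ => 1 - x * a ^ n) := by
  by_cases hzero : ∃ n : ℕ, 1 - x * a ^ n = 0
  · obtain ⟨n0, hn0⟩ := hzero
    refine ⟨0, ?_⟩
    have hev : ∀ᶠ s : Finset ℕ in Filter.atTop, (∏ i ∈ s, (1 - x * a ^ i)) = 0 := by
      filter_upwards [Filter.eventually_ge_atTop ({n0} : Finset ℕ)] with s hs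
      exact Finset.prod_eq_zero (hs (Finset.mem_singleton_self n0)) hn0
    exact tendsto_const_nhds.congr' (hev.mono fun s hs => hs.symm)
  · push_neg at hzero
    have key : Summable (fun n : ℕ => Complex.log (1 - x * a ^ n)) := by
      have hgeo : Summable (fun n : ℕ => (3/2) * (‖x‖ * ‖a‖ ^ n)) :=
        ((summable_geometric_of_lt_one (by positivity) ha).mul_left _).mul_left _
      apply Summable.of_norm_bounded_eventually_nat hgeo
      have hten : Filter.Tendsto (fun n : ℕ => ‖x‖ * ‖a‖ ^ n)
          Filter.atTop (nhds 0) := by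
        simpa using (tendsto_pow_atTop_nhds_zero_of_lt_one (by positivity)
            ha).const_mul (‖x‖)
      filter_upwards [hten.eventually_le_const (show (0:ℝ) < 1/2 by norm_num)] with n hn
      have hb : ‖-(x * a ^ n)‖ ≤ 1/2 := by
        simpa [norm_mul, norm_pow] using hn
      have := Complex.norm_log_one_add_half_le_self hb
      simpa [norm_mul, norm_pow, sub_eq_add_neg] using this
    exact Complex.multipliable_of_summable_log key

lemma qPoch_shift (a x : ℂ) (ha : ‖a‖ < 1) :
    qPoch x a = (1 - x) * qPoch (a * x) a := by
  have hm : Multipliable (fun n : ℕ => 1 - x * a ^ (n + 1)) := by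
    have := qPoch_multipliable (a * x) a ha
    apply this.congr
    intro n
    ring_nf
  calc qPoch x a = (1 - x * a ^ 0) * ∏' n : ℕ, (1 - x * a ^ (n + 1)) :=
        tprod_eq_zero_mul' hm
    _ = (1 - x) * qPoch (a * x) a := by
        rw [pow_zero, mul_one, qPoch]
        congr 1
        exact tprod_congr fun n => by ring_nf

lemma theta_step (a z : ℂ) (ha : ‖a‖ < 1) (ha0 : a ≠ 0) (hz : z ≠ 0) :
    z * theta a (a * z) = - theta a z := by
  have h1 : a * (a * z)⁻¹ = z⁻¹ := by field_simp
  rw [theta, theta, h1, qPoch_shift a z⁻¹ ha, qPoch_shift a z ha]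
  field_simp
  ring

lemma theta_shift_nat (a y : ℂ) (ha : ‖a‖ < 1) (ha0 : a ≠ 0) (hy : y ≠ 0) :
    ∀ n : ℕ, theta a (a ^ n * y) * ∏ k ∈ Finset.range n, (a ^ k * y) = (-1) ^ n * theta a y := by
  intro n
  induction n with
  | zero => simp
  | succ n ih =>
      have hzn : a ^ n * y ≠ 0 := mul_ne_zero (pow_ne_zero n ha0) hy
      have hstep := theta_step a (a ^ n * y) ha ha0 hzn
      rw [Finset.prod_range_succ]
      have harg : a ^ (n + 1) * y = a * (a ^ n * y) := by ring
      rw [harg]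
      calc theta a (a * (a ^ n * y)) * ((∏ k ∈ Finset.range n, (a ^ k * y)) * (a ^ n * y))
          = ((a ^ n * y) * theta a (a * (a ^ n * y))) * ∏ k ∈ Finset.range n, (a ^ k * y) := by
            ring
        _ = (- theta a (a ^ n * y)) * ∏ k ∈ Finset.range n, (a ^ k * y) := by rw [hstep]
        _ = - ((-1) ^ n * theta a y) := by rw [neg_mul, ih]
        _ = (-1) ^ (n + 1) * theta a y := by ring

lemma theta_pair (a y y' : ℂ) (ha : ‖a‖ < 1) (ha0 : a ≠ 0) (hy : y ≠ 0)
    (hy' : y' ≠ 0) (s : ℕ) :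
    theta a (y * a ^ s) * y ^ s * theta a y' = theta a (y' * a ^ s) * y' ^ s * theta a y := by
  have hA : (∏ k ∈ Finset.range s, a ^ k) ≠ 0 :=
    Finset.prod_ne_zero_iff.2 fun k _ => pow_ne_zero k ha0
  have key : ∀ w : ℂ, w ≠ 0 →
      theta a (w * a ^ s) * ((∏ k ∈ Finset.range s, a ^ k) * w ^ s) = (-1) ^ s * theta a w := by
    intro w hw
    have := theta_shift_nat a w ha ha0 hw s
    rw [Finset.prod_mul_distrib, Finset.prod_const, Finset.card_range] at this
    rw [mul_comm w (a ^ s)]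
    exact this
  have e1 := key y hy
  have e2 := key y' hy'
  apply mul_left_cancel₀ hA
  linear_combination theta a y' * e1 - theta a y * e2

lemma theta_pair_inv (a y y' : ℂ) (ha : ‖a‖ < 1) (ha0 : a ≠ 0) (hy : y ≠ 0)
    (hy' : y' ≠ 0) (s : ℕ) :
    theta a (y * (a ^ s)⁻¹) * theta a y' * y' ^ s =
      theta a (y' * (a ^ s)⁻¹) * theta a y * y ^ s := by
  have key : ∀ w : ℂ, w ≠ 0 → theta a (w * (a ^ s)⁻¹) =
      (-1) ^ s * theta a w * ((∏ k ∈ Finset.range s, a ^ k) * (w * (a ^ s)⁻¹) ^ s) := by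
    intro w hw
    have hw' : w * (a ^ s)⁻¹ ≠ 0 := mul_ne_zero hw (inv_ne_zero (pow_ne_zero s ha0))
    have h := theta_shift_nat a (w * (a ^ s)⁻¹) ha ha0 hw' s
    rw [Finset.prod_mul_distrib, Finset.prod_const, Finset.card_range] at h
    have harg : a ^ s * (w * (a ^ s)⁻¹) = w := by
      field_simp
    rw [harg] at h
    have hsgn : ((-1 : ℂ) ^ s) * ((-1 : ℂ) ^ s) = 1 := by
      rw [← mul_pow]; norm_num
    calc theta a (w * (a ^ s)⁻¹)
        = ((-1 : ℂ) ^ s * (-1 : ℂ) ^ s) * theta a (w * (a ^ s)⁻¹) := by rw [hsgn, one_mul]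
      _ = (-1 : ℂ) ^ s * ((-1 : ℂ) ^ s * theta a (w * (a ^ s)⁻¹)) := by ring
      _ = (-1 : ℂ) ^ s * (theta a w *
            ((∏ k ∈ Finset.range s, a ^ k) * (w * (a ^ s)⁻¹) ^ s)) := by
            rw [← h]
      _ = (-1) ^ s * theta a w * ((∏ k ∈ Finset.range s, a ^ k) * (w * (a ^ s)⁻¹) ^ s) := by
            ring
  rw [key y hy, key y' hy', mul_pow y, mul_pow y']
  ring

theorem F_invariant_p_mul_q4 (q p : ℂ) (hq0 : 0 < ‖q‖) (hq1 : ‖q‖ < 1)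
    (hp0 : 0 < ‖p‖) (hp1 : ‖p‖ < 1)
    (hpq4 : ‖p * q ^ 4‖ < 1)
    (m : ℕ) (hm : 0 < m) (x : ℂ) (hx : x ≠ 0)
    (hden : ∀ s ∈ Finset.Icc 1 (2 * m),
      theta (q ^ 4) (x⁻¹ ^ 2 * p ^ (s : ℤ)) ≠ 0 ∧
      theta (q ^ 4) (x ^ 2 * p ^ (-(s : ℤ))) ≠ 0)
    (hden' : ∀ s ∈ Finset.Icc 1 (2 * m),
      theta (q ^ 4) (x⁻¹ ^ 2 * (p * q ^ 4) ^ (s : ℤ)) ≠ 0 ∧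
      theta (q ^ 4) (x ^ 2 * (p * q ^ 4) ^ (-(s : ℤ))) ≠ 0) :
    Fexch q p m x = Fexch q (p * q ^ 4) m x := by
  have hq : q ≠ 0 := by
    intro h; rw [h] at hq0; simp at hq0
  have hp : p ≠ 0 := by
    intro h; rw [h] at hp0; simp at hp0
  have ha0 : (q : ℂ) ^ 4 ≠ 0 := pow_ne_zero 4 hq
  have ha1 : ‖q ^ 4‖ < 1 := by
    rw [norm_pow]
    exact pow_lt_one₀ (norm_nonneg q) hq1 (by norm_num)
  unfold Fexch
  refine Finset.prod_congr rfl fun s hs => ?_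
  obtain ⟨hV2, hV1⟩ := hden s hs
  obtain ⟨hV2', hV1'⟩ := hden' s hs
  -- argument rewrites
  have e2 : x⁻¹ ^ 2 * q ^ 2 * (p * q ^ 4) ^ (s : ℤ) =
      (x⁻¹ ^ 2 * q ^ 2 * p ^ (s : ℤ)) * (q ^ 4) ^ s := by
    rw [mul_zpow, zpow_natCast (q ^ 4) s]; ring
  have e3 : x⁻¹ ^ 2 * (p * q ^ 4) ^ (s : ℤ) =
      (x⁻¹ ^ 2 * p ^ (s : ℤ)) * (q ^ 4) ^ s := by
    rw [mul_zpow, zpow_natCast (q ^ 4) s]; ring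
  have e1 : x ^ 2 * q ^ 2 * (p * q ^ 4) ^ (-(s : ℤ)) =
      (x ^ 2 * q ^ 2 * p ^ (-(s : ℤ))) * ((q ^ 4) ^ s)⁻¹ := by
    rw [zpow_neg, zpow_neg, mul_zpow, mul_inv, zpow_natCast (q ^ 4) s]; ring
  have e4 : x ^ 2 * (p * q ^ 4) ^ (-(s : ℤ)) =
      (x ^ 2 * p ^ (-(s : ℤ))) * ((q ^ 4) ^ s)⁻¹ := by
    rw [zpow_neg, zpow_neg, mul_zpow, mul_inv, zpow_natCast (q ^ 4) s]; ring
  rw [e1, e2, e3, e4]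
  rw [e3] at hV2'
  rw [e4] at hV1'
  -- nonzeroness of arguments
  have hxi : x⁻¹ ≠ 0 := inv_ne_zero hx
  have hps : (p : ℂ) ^ (s : ℤ) ≠ 0 := zpow_ne_zero _ hp
  have hpns : (p : ℂ) ^ (-(s : ℤ)) ≠ 0 := zpow_ne_zero _ hp
  have hU2 : x⁻¹ ^ 2 * q ^ 2 * p ^ (s : ℤ) ≠ 0 :=
    mul_ne_zero (mul_ne_zero (pow_ne_zero 2 hxi) (pow_ne_zero 2 hq)) hps
  have hV2x : x⁻¹ ^ 2 * p ^ (s : ℤ) ≠ 0 := mul_ne_zero (pow_ne_zero 2 hxi) hps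
  have hU1 : x ^ 2 * q ^ 2 * p ^ (-(s : ℤ)) ≠ 0 :=
    mul_ne_zero (mul_ne_zero (pow_ne_zero 2 hx) (pow_ne_zero 2 hq)) hpns
  have hV1x : x ^ 2 * p ^ (-(s : ℤ)) ≠ 0 := mul_ne_zero (pow_ne_zero 2 hx) hpns
  -- the two pairing identities
  have h2 := theta_pair (q ^ 4) (x⁻¹ ^ 2 * q ^ 2 * p ^ (s : ℤ)) (x⁻¹ ^ 2 * p ^ (s : ℤ))
    ha1 ha0 hU2 hV2x s
  have h1 := theta_pair_inv (q ^ 4) (x ^ 2 * q ^ 2 * p ^ (-(s : ℤ))) (x ^ 2 * p ^ (-(s : ℤ)))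
    ha1 ha0 hU1 hV1x s
  have h12 : (theta (q ^ 4) ((x⁻¹ ^ 2 * q ^ 2 * p ^ (s : ℤ)) * (q ^ 4) ^ s) *
        (x⁻¹ ^ 2 * q ^ 2 * p ^ (s : ℤ)) ^ s * theta (q ^ 4) (x⁻¹ ^ 2 * p ^ (s : ℤ))) *
      (theta (q ^ 4) ((x ^ 2 * q ^ 2 * p ^ (-(s : ℤ))) * ((q ^ 4) ^ s)⁻¹) *
        theta (q ^ 4) (x ^ 2 * p ^ (-(s : ℤ))) * (x ^ 2 * p ^ (-(s : ℤ))) ^ s) =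
      (theta (q ^ 4) ((x⁻¹ ^ 2 * p ^ (s : ℤ)) * (q ^ 4) ^ s) *
        (x⁻¹ ^ 2 * p ^ (s : ℤ)) ^ s * theta (q ^ 4) (x⁻¹ ^ 2 * q ^ 2 * p ^ (s : ℤ))) *
      (theta (q ^ 4) ((x ^ 2 * p ^ (-(s : ℤ))) * ((q ^ 4) ^ s)⁻¹) *
        theta (q ^ 4) (x ^ 2 * q ^ 2 * p ^ (-(s : ℤ))) *
        (x ^ 2 * q ^ 2 * p ^ (-(s : ℤ))) ^ s) := by
    rw [h1, h2]
  have hUV : (x ^ 2 * q ^ 2 * p ^ (-(s : ℤ))) ^ s * (x⁻¹ ^ 2 * p ^ (s : ℤ)) ^ s =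
      (x⁻¹ ^ 2 * q ^ 2 * p ^ (s : ℤ)) ^ s * (x ^ 2 * p ^ (-(s : ℤ))) ^ s := by
    rw [← mul_pow, ← mul_pow]
    congr 1
    ring
  rw [div_eq_div_iff (mul_ne_zero hV2 hV1) (mul_ne_zero hV2' hV1')]
  apply mul_right_cancel₀ (mul_ne_zero (pow_ne_zero s hU2) (pow_ne_zero s hV1x))
  linear_combination (-(q⁻¹)) * h12 - q⁻¹ * theta (q ^ 4) ((x⁻¹ ^ 2 * p ^ (s : ℤ)) * (q ^ 4) ^ s) *
      theta (q ^ 4) ((x ^ 2 * p ^ (-(s : ℤ))) * ((q ^ 4) ^ s)⁻¹) *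
      theta (q ^ 4) (x⁻¹ ^ 2 * q ^ 2 * p ^ (s : ℤ)) *
      theta (q ^ 4) (x ^ 2 * q ^ 2 * p ^ (-(s : ℤ))) * hUV
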